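/- For every integer n ≥ 1 and every natural number m, f_n(2m+1) = u_m and f_n(2m) = 0. -/

import Mathlib

/-- The ±1 Thue–Morse sequence: `u n = (-1)^(s₂(n)+1)` where `s₂` is the binary digit sum. -/
def u (n : ℕ) : ℤ := (-1) ^ ((Nat.digits 2 n).sum + 1)

/-- The "Pascal triangle" associated to the Thue–Morse sequence:
`Sig k n` is `Σ^k_n` (k the superscript, n the subscript). -/
def Sig : ℕ → ℕ → ℤ
  | k, 0 => u k
  | 0, _ + 1 => 0
  | k + 1, n + 1 => Sig k n + Sig k (n + 1)

/-- The renormalized points `x^k_n = 2^{-(n-1)(n-2)/2} Σ^k_n`. -/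
noncomputable def xkn (n k : ℕ) : ℝ := (Sig k n : ℝ) / 2 ^ ((n - 1) * (n - 2) / 2)

/-- The piecewise linear interpolation `f n` of the points `x^k_n` at `k/2^{n-1}`,
vanishing on the nonpositive reals. -/
noncomputable def f (n : ℕ) (x : ℝ) : ℝ :=
  if x ≤ 0 then 0
  else
    xkn n ⌊(2 : ℝ) ^ (n - 1) * x⌋₊ +
      (2 : ℝ) ^ (n - 1) * (x - (⌊(2 : ℝ) ^ (n - 1) * x⌋₊ : ℝ) / 2 ^ (n - 1)) *
        (xkn n (⌊(2 : ℝ) ^ (n - 1) * x⌋₊ + 1) - xkn n ⌊(2 : ℝ) ^ (n - 1) * x⌋₊)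

/- ### Basic lemmas on `u` -/

lemma u_even (k : ℕ) : u (2 * k) = u k := by
  rcases Nat.eq_zero_or_pos k with rfl | hk
  · rfl
  · unfold u
    rw [Nat.digits_def' (by norm_num : 1 < 2) (by omega)]
    simp [Nat.mul_div_cancel_left, Nat.mul_mod_right]

lemma u_odd (k : ℕ) : u (2 * k + 1) = -u k := by
  unfold u
  rw [Nat.digits_def' (by norm_num : 1 < 2) (by omega)]
  have h1 : (2 * k + 1) % 2 = 1 := by omega
  have h2 : (2 * k + 1) / 2 = k := by omega
  rw [h1, h2]
  simp [pow_succ, pow_add]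

/- ### Basic lemmas on `Sig` -/

lemma Sig_zero_right (k : ℕ) : Sig k 0 = u k := by cases k <;> rfl

lemma Sig_zero_left (n : ℕ) : Sig 0 (n + 1) = 0 := rfl

lemma Sig_succ_succ (k n : ℕ) : Sig (k + 1) (n + 1) = Sig k n + Sig k (n + 1) := rfl

/- ### The doubling coefficients -/

/-- Coefficients expressing `Sig (2k) n` in terms of `Sig k j`. -/
def A : ℕ → ℕ → ℤ
  | 0, 0 => 1
  | 0, _ + 1 => 0
  | 1, _ => 0
  | n + 2, 0 => 0
  | n + 2, j + 1 => 2 * A (n + 1) j + A n j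

/-- Coefficients expressing `Sig (2k+1) n` in terms of `Sig k j`. -/
def B (n j : ℕ) : ℤ := if n = 0 then -(A 0 j) else A n j + A (n - 1) j

lemma A_succ_zero (n : ℕ) : A (n + 1) 0 = 0 := by
  cases n <;> rfl

lemma A_lt (n : ℕ) : ∀ j, n < j → A n j = 0 := by
  induction n using Nat.strong_induction_on with
  | _ n ih =>
    intro j hj
    match n, j with
    | 0, j + 1 => rfl
    | 1, j => rfl
    | n + 2, j + 1 =>
      show 2 * A (n + 1) j + A n j = 0
      rw [ih (n + 1) (by omega) j (by omega), ih n (by omega) j (by omega)]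
      ring

lemma A_diag (n : ℕ) : A (n + 1) (n + 1) = 0 := by
  induction n with
  | zero => rfl
  | succ n ih =>
    show 2 * A (n + 1) (n + 1) + A n (n + 1) = 0
    rw [ih, A_lt n (n + 1) (by omega)]
    ring

lemma A_subdiag (n : ℕ) : A (n + 2) (n + 1) = 2 ^ n := by
  induction n with
  | zero => rfl
  | succ n ih =>
    show 2 * A (n + 2) (n + 1) + A (n + 1) (n + 1) = 2 ^ (n + 1)
    rw [ih, A_diag]
    ring

lemma A_succ_succ (n j : ℕ) : A (n + 1) (j + 1) = A n j + B n j := by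
  cases n with
  | zero => show (0 : ℤ) = A 0 j + B 0 j; simp [B]
  | succ n =>
    show 2 * A (n + 1) j + A n j = A (n + 1) j + B (n + 1) j
    simp [B]
    ring

/- ### The main doubling identity -/

lemma EO (n : ℕ) :
    (∀ k, Sig (2 * k) n = ∑ j ∈ Finset.range (n + 1), A n j * Sig k j) ∧
    (∀ k, Sig (2 * k + 1) n = ∑ j ∈ Finset.range (n + 1), B n j * Sig k j) := by
  induction n with
  | zero =>
    constructor
    · intro k
      simp [Sig_zero_right, u_even, A]
    · intro k
      simp [Sig_zero_right, u_odd, B, A]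
  | succ n ih =>
    obtain ⟨hE, hO⟩ := ih
    have heven : ∀ k, Sig (2 * k) (n + 1) =
        ∑ j ∈ Finset.range (n + 2), A (n + 1) j * Sig k j := by
      intro k
      induction k with
      | zero =>
        rw [mul_zero, Sig_zero_left, Finset.sum_range_succ']
        simp [A_succ_zero, Sig_zero_left]
      | succ k ihk =>
        have hL : Sig (2 * (k + 1)) (n + 1)
            = Sig (2 * k) (n + 1) + Sig (2 * k) n + Sig (2 * k + 1) n := by
          have h1 : 2 * (k + 1) = (2 * k + 1) + 1 := by ring
          rw [h1, Sig_succ_succ, Sig_succ_succ]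
          ring
        rw [hL, ihk, hE k, hO k]
        rw [Finset.sum_range_succ' (fun j => A (n + 1) j * Sig (k + 1) j) (n + 1),
          Finset.sum_range_succ' (fun j => A (n + 1) j * Sig k j) (n + 1)]
        simp only [A_succ_zero, zero_mul, add_zero, Sig_succ_succ, A_succ_succ,
          add_mul, mul_add, Finset.sum_add_distrib]
        ring
    refine ⟨heven, ?_⟩
    intro k
    have hL : Sig (2 * k + 1) (n + 1) = Sig (2 * k) n + Sig (2 * k) (n + 1) :=
      Sig_succ_succ _ _
    rw [hL, hE k, heven k]
    have hB : ∀ j, B (n + 1) j = A (n + 1) j + A n j := by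
      intro j; simp [B]
    simp only [hB, add_mul, Finset.sum_add_distrib]
    rw [Finset.sum_range_succ (fun j => A n j * Sig k j) (n + 1),
      A_lt n (n + 1) (by omega)]
    ring

/- ### Values on the grid -/

lemma exponent_step (t : ℕ) : t * (t - 1) / 2 + t = (t + 1) * t / 2 := by
  have h1 : t * (t - 1) / 2 = t.choose 2 := (Nat.choose_two_right t).symm
  have h2 : (t + 1) * t / 2 = (t + 1).choose 2 := by
    rw [Nat.choose_two_right]; simp
  rw [h1, h2, Nat.choose_succ_succ, Nat.choose_one_right]
  ring

lemma grid (t : ℕ) :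
    (∀ q j, 1 ≤ j → j ≤ t → Sig (2 ^ t * q) j = 0) ∧
    (∀ q, Sig (2 ^ t * q) (t + 1) = 2 ^ (t * (t - 1) / 2) * Sig q 1) := by
  induction t with
  | zero =>
    refine ⟨fun q j h1 h2 => by omega, fun q => by simp⟩
  | succ t ih =>
    obtain ⟨ihz, ihv⟩ := ih
    have hdouble : ∀ q, 2 ^ (t + 1) * q = 2 * (2 ^ t * q) := by
      intro q; ring
    constructor
    · intro q j h1 h2
      rw [hdouble, (EO j).1 (2 ^ t * q)]
      apply Finset.sum_eq_zero
      intro i hi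
      simp only [Finset.mem_range] at hi
      match i with
      | 0 =>
        obtain ⟨j', rfl⟩ : ∃ j', j = j' + 1 := ⟨j - 1, by omega⟩
        rw [A_succ_zero]; ring
      | i + 1 =>
        by_cases hle : i + 1 ≤ t
        · rw [ihz q (i + 1) (by omega) hle]; ring
        · have hj : j = t + 1 := by omega
          have hi1 : i + 1 = t + 1 := by omega
          rw [hj, hi1, A_diag]; ring
    · intro q
      rw [hdouble, (EO (t + 2)).1 (2 ^ t * q)]
      rw [Finset.sum_eq_single (t + 1)]
      · rw [A_subdiag, ihv q]
        have ht : t + 1 - 1 = t := rfl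
        rw [ht, ← exponent_step t, pow_add]
        ring
      · intro i hi hne
        simp only [Finset.mem_range] at hi
        match i with
        | 0 => rw [A_succ_zero]; ring
        | i + 1 =>
          by_cases hle : i + 1 ≤ t
          · rw [ihz q (i + 1) (by omega) hle]; ring
          · have : i + 1 = t + 2 := by omega
            rw [this, A_diag]; ring
      · intro h
        exact absurd (Finset.mem_range.2 (by omega)) h

lemma Sig_one (m : ℕ) : Sig (2 * m) 1 = 0 ∧ Sig (2 * m + 1) 1 = u m := by
  induction m with
  | zero =>
    refine ⟨rfl, ?_⟩
    show Sig 0 0 + Sig 0 1 = u 0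
    rw [Sig_zero_right, Sig_zero_left]; simp
  | succ m ih =>
    obtain ⟨h1, h2⟩ := ih
    have he : Sig (2 * (m + 1)) 1 = 0 := by
      have : 2 * (m + 1) = (2 * m + 1) + 1 := by ring
      rw [this, Sig_succ_succ, Sig_zero_right, u_odd, h2]; ring
    refine ⟨he, ?_⟩
    rw [Sig_succ_succ, Sig_zero_right, u_even, he]; ring

/-- The value of `Sig` at grid points. -/
lemma Sig_value (n : ℕ) (hn : 1 ≤ n) (q : ℕ) :
    Sig (2 ^ (n - 1) * q) n = 2 ^ ((n - 1) * (n - 2) / 2) * Sig q 1 := by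
  obtain ⟨t, rfl⟩ : ∃ t, n = t + 1 := ⟨n - 1, by omega⟩
  have h1 : t + 1 - 1 = t := by omega
  have h2 : t + 1 - 2 = t - 1 := by omega
  rw [h1, h2]
  exact (grid t).2 q

lemma floor_eq (n : ℕ) (q : ℕ) :
    ⌊(2 : ℝ) ^ (n - 1) * (q : ℝ)⌋₊ = 2 ^ (n - 1) * q := by
  have : (2 : ℝ) ^ (n - 1) * (q : ℝ) = ((2 ^ (n - 1) * q : ℕ) : ℝ) := by
    push_cast; ring
  rw [this, Nat.floor_natCast]

lemma f_at_nat (n : ℕ) (q : ℕ) (hq : 1 ≤ q) : f n (q : ℝ) = xkn n (2 ^ (n - 1) * q) := by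
  unfold f
  have hq0 : ¬ ((q : ℝ) ≤ 0) := by
    push_neg
    exact_mod_cast hq
  rw [if_neg hq0, floor_eq]
  have hδ : (q : ℝ) - ((2 ^ (n - 1) * q : ℕ) : ℝ) / 2 ^ (n - 1) = 0 := by
    have hc : ((2 ^ (n - 1) * q : ℕ) : ℝ) = 2 ^ (n - 1) * (q : ℝ) := by
      push_cast; ring
    have h2 : (2 : ℝ) ^ (n - 1) ≠ 0 := by positivity
    rw [hc]
    field_simp
    ring
  rw [hδ]
  ring

theorem f_values_at_integers (n : ℕ) (hn : 1 ≤ n) (m : ℕ) :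
    f n (2 * m + 1) = (u m : ℝ) ∧ f n (2 * m) = 0 := by
  have hpow : (0 : ℝ) < 2 ^ ((n - 1) * (n - 2) / 2) := by positivity
  constructor
  · have h1 : (2 * (m : ℝ) + 1) = ((2 * m + 1 : ℕ) : ℝ) := by push_cast; ring
    rw [h1, f_at_nat n (2 * m + 1) (by omega)]
    unfold xkn
    rw [Sig_value n hn (2 * m + 1), (Sig_one m).2]
    push_cast
    field_simp
  · rcases Nat.eq_zero_or_pos m with rfl | hm
    · have h0 : (2 * ((0:ℕ) : ℝ)) = (0:ℝ) := by norm_num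
      rw [h0]
      unfold f
      rw [if_pos le_rfl]
    · have h1 : (2 * (m : ℝ)) = ((2 * m : ℕ) : ℝ) := by push_cast; ring
      rw [h1, f_at_nat n (2 * m) (by omega)]
      unfold xkn
      rw [Sig_value n hn (2 * m), (Sig_one m).1]
      simp
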